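/- Let Y_1,…,Y_d be independent nonnegative random variables with common distribution D and t ≥ 1. Then E[(Y_1+…+Y_d)^t]^{1/t} ≤ e · inf{ u > 0 : E_{Y~D}[(1 + Y/u)^t] ≤ e^{t/d} }. -/

import Mathlib

open MeasureTheory ProbabilityTheory Filter

lemma latala_aux_one_add_sum_le_prod {ι : Type*} (s : Finset ι) (x : ι → ℝ)
    (hx : ∀ i, 0 ≤ x i) : 1 + ∑ i ∈ s, x i ≤ ∏ i ∈ s, (1 + x i) := by
  induction s using Finset.cons_induction with
  | empty => simp
  | cons i s hi ih =>
    rw [Finset.sum_cons, Finset.prod_cons]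
    have h1 : (0:ℝ) ≤ ∑ j ∈ s, x j := Finset.sum_nonneg fun j _ => hx j
    nlinarith [hx i, mul_nonneg (hx i) h1]

lemma latala_aux_integral_prod {Ω ι : Type*} [MeasurableSpace Ω] {μ : Measure Ω}
    [IsProbabilityMeasure μ] (g : ι → Ω → ℝ)
    (hindep : iIndepFun g μ)
    (hmeas : ∀ i, Measurable (g i)) (hint : ∀ i, Integrable (g i) μ) (s : Finset ι) :
    Integrable (fun ω => ∏ i ∈ s, g i ω) μ ∧
      ∫ ω, ∏ i ∈ s, g i ω ∂μ = ∏ i ∈ s, ∫ ω, g i ω ∂μ := by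
  induction s using Finset.cons_induction with
  | empty => exact ⟨by simp, by simp⟩
  | cons i s hi ih =>
    have hIndep : IndepFun (∏ j ∈ s, g j) (g i) μ :=
      hindep.indepFun_finsetProd_of_notMem hmeas hi
    have hPe : (∏ j ∈ s, g j) = (fun ω => ∏ j ∈ s, g j ω) := by
      ext ω; simp [Finset.prod_apply]
    have hP : Integrable (∏ j ∈ s, g j) μ := by rw [hPe]; exact ih.1
    have hmul : Integrable ((∏ j ∈ s, g j) * g i) μ := hIndep.integrable_mul hP (hint i)
    have key : ∫ ω, ((∏ j ∈ s, g j) * g i) ω ∂μ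
        = (∫ ω, (∏ j ∈ s, g j) ω ∂μ) * ∫ ω, g i ω ∂μ :=
      hIndep.integral_mul_eq_mul_integral hP.aestronglyMeasurable (hint i).aestronglyMeasurable
    have hfe : (fun ω => ∏ j ∈ Finset.cons i s hi, g j ω) = (∏ j ∈ s, g j) * g i := by
      ext ω; simp [Finset.prod_cons, Finset.prod_apply, mul_comm]
    constructor
    · rw [hfe]; exact hmul
    · calc ∫ ω, ∏ j ∈ Finset.cons i s hi, g j ω ∂μ
          = ∫ ω, ((∏ j ∈ s, g j) * g i) ω ∂μ := by rw [← hfe]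
        _ = (∫ ω, (∏ j ∈ s, g j) ω ∂μ) * ∫ ω, g i ω ∂μ := key
        _ = (∏ j ∈ s, ∫ ω, g j ω ∂μ) * ∫ ω, g i ω ∂μ := by
            rw [hPe, ih.2]
        _ = ∏ j ∈ Finset.cons i s hi, ∫ ω, g j ω ∂μ := by
            rw [Finset.prod_cons, mul_comm]

/-- Latała's moment estimate: for i.i.d. nonnegative random variables `Y_1,…,Y_d` and `t ≥ 1`,
`E[(Y_1+…+Y_d)^t]^(1/t) ≤ e · inf { u > 0 : E[(1+Y/u)^t] ≤ e^(t/d) }`. -/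
theorem latala_moment_bound
    {Ω : Type*} [MeasurableSpace Ω] (μ : Measure Ω) [IsProbabilityMeasure μ]
    (d : ℕ) (hd : 1 ≤ d) (Y : Fin d → Ω → ℝ)
    (hpos : ∀ i ω, 0 ≤ Y i ω)
    (hmeas : ∀ i, Measurable (Y i))
    (hid : ∀ i : Fin d, Measure.map (Y i) μ = Measure.map (Y ⟨0, hd⟩) μ)
    (hindep : iIndepFun Y μ)
    (t : ℝ) (ht : 1 ≤ t)
    (hint : ∀ u : ℝ, 0 < u → Integrable (fun ω => (1 + Y ⟨0, hd⟩ ω / u) ^ t) μ)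
    (hintS : Integrable (fun ω => (∑ i, Y i ω) ^ t) μ) :
    (∫ ω, (∑ i, Y i ω) ^ t ∂μ) ^ (1 / t) ≤
      Real.exp 1 *
        sInf {u : ℝ | 0 < u ∧ ∫ ω, (1 + Y ⟨0, hd⟩ ω / u) ^ t ∂μ ≤ Real.exp (t / d)} := by
  set Y0 : Ω → ℝ := Y ⟨0, hd⟩ with hY0
  set S : Set ℝ := {u : ℝ | 0 < u ∧ ∫ ω, (1 + Y0 ω / u) ^ t ∂μ ≤ Real.exp (t / d)} with hS
  have ht0 : (0:ℝ) < t := lt_of_lt_of_le zero_lt_one ht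
  have htne : t ≠ 0 := ne_of_gt ht0
  have hdpos : (0:ℝ) < (d:ℝ) := by exact_mod_cast hd
  -- Step A : main bound for each u ∈ S
  have key : ∀ u ∈ S, (∫ ω, (∑ i, Y i ω) ^ t ∂μ) ^ (1 / t) ≤ Real.exp 1 * u := by
    intro u hu
    obtain ⟨hu0, huB⟩ := hu
    have hφm : Measurable (fun x : ℝ => (1 + x / u) ^ t) :=
      (Real.continuous_rpow_const ht0.le).measurable.comp
        (measurable_const.add (measurable_id.div_const u))
    set g : Fin d → Ω → ℝ := fun i ω => (1 + Y i ω / u) ^ t with hg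
    have hg_meas : ∀ i, Measurable (g i) := fun i => hφm.comp (hmeas i)
    have hg_indep : iIndepFun g μ :=
      hindep.comp (fun _ x => (1 + x / u) ^ t) (fun _ => hφm)
    have h0 : Integrable (fun x : ℝ => (1 + x / u) ^ t) (Measure.map Y0 μ) :=
      (integrable_map_measure hφm.aestronglyMeasurable (hmeas _).aemeasurable).mpr (hint u hu0)
    have hg_int : ∀ i, Integrable (g i) μ := by
      intro i
      have := (integrable_map_measure hφm.aestronglyMeasurable
        (hmeas i).aemeasurable).mp (by rw [hid i]; exact h0)
      exact this
    have hg_ival : ∀ i, ∫ ω, g i ω ∂μ = ∫ ω, (1 + Y0 ω / u) ^ t ∂μ := by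
      intro i
      have h1 : ∫ ω, g i ω ∂μ = ∫ x, (1 + x / u) ^ t ∂(Measure.map (Y i) μ) :=
        (integral_map (hmeas i).aemeasurable hφm.aestronglyMeasurable).symm
      have h2 : ∫ x, (1 + x / u) ^ t ∂(Measure.map Y0 μ) = ∫ ω, (1 + Y0 ω / u) ^ t ∂μ :=
        integral_map (hmeas _).aemeasurable hφm.aestronglyMeasurable
      rw [h1, hid i, h2]
    -- pointwise bound
    have hpt : ∀ ω, (∑ i, Y i ω) ^ t ≤ u ^ t * ∏ i, g i ω := by
      intro ω
      have hxnn : ∀ i : Fin d, 0 ≤ Y i ω / u := fun i => div_nonneg (hpos i ω) hu0.le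
      have h1 : ∑ i, Y i ω / u ≤ ∏ i, (1 + Y i ω / u) :=
        le_trans (by linarith [Finset.sum_nonneg (fun i (_ : i ∈ Finset.univ) => hxnn i)])
          (latala_aux_one_add_sum_le_prod Finset.univ _ hxnn)
      have h2 : ∑ i, Y i ω ≤ u * ∏ i, (1 + Y i ω / u) := by
        have : ∑ i, Y i ω = u * ∑ i, Y i ω / u := by
          rw [Finset.mul_sum]
          exact Finset.sum_congr rfl fun i _ => (mul_div_cancel₀ _ (ne_of_gt hu0)).symm
        rw [this]
        exact mul_le_mul_of_nonneg_left h1 hu0.le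
      have hsnn : 0 ≤ ∑ i, Y i ω := Finset.sum_nonneg fun i _ => hpos i ω
      have hprodnn : ∀ i ∈ Finset.univ, 0 ≤ 1 + Y i ω / u := fun i _ => by linarith [hxnn i]
      calc (∑ i, Y i ω) ^ t ≤ (u * ∏ i, (1 + Y i ω / u)) ^ t :=
            Real.rpow_le_rpow hsnn h2 ht0.le
        _ = u ^ t * (∏ i, (1 + Y i ω / u)) ^ t :=
            Real.mul_rpow hu0.le (Finset.prod_nonneg hprodnn)
        _ = u ^ t * ∏ i, g i ω := by
            rw [← Real.finset_prod_rpow Finset.univ _ hprodnn t]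
    -- integrate
    have hInt2 : Integrable (fun ω => u ^ t * ∏ i, g i ω) μ :=
      (latala_aux_integral_prod g hg_indep hg_meas hg_int Finset.univ).1.const_mul _
    have hIle : ∫ ω, (∑ i, Y i ω) ^ t ∂μ ≤ u ^ t * Real.exp t := by
      calc ∫ ω, (∑ i, Y i ω) ^ t ∂μ ≤ ∫ ω, u ^ t * ∏ i, g i ω ∂μ :=
            integral_mono hintS hInt2 hpt
        _ = u ^ t * ∫ ω, ∏ i, g i ω ∂μ := integral_const_mul _ _
        _ = u ^ t * ∏ i : Fin d, ∫ ω, g i ω ∂μ := by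
            rw [(latala_aux_integral_prod g hg_indep hg_meas hg_int Finset.univ).2]
        _ ≤ u ^ t * ∏ _i : Fin d, Real.exp (t / d) := by
            refine mul_le_mul_of_nonneg_left ?_ (Real.rpow_nonneg hu0.le t)
            refine Finset.prod_le_prod (fun i _ => ?_) (fun i _ => ?_)
            · exact integral_nonneg fun ω => Real.rpow_nonneg
                (by linarith [div_nonneg (hpos i ω) hu0.le] : (0:ℝ) ≤ 1 + Y i ω / u) t
            · rw [hg_ival i]; exact huB
        _ = u ^ t * Real.exp t := by
            rw [Finset.prod_const, Finset.card_univ, Fintype.card_fin,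
              ← Real.exp_nat_mul, mul_div_cancel₀ t (ne_of_gt hdpos)]
    have hfinal : ∫ ω, (∑ i, Y i ω) ^ t ∂μ ≤ (Real.exp 1 * u) ^ t := by
      rw [Real.mul_rpow (Real.exp_pos 1).le hu0.le, Real.exp_one_rpow, mul_comm]
      exact hIle
    calc (∫ ω, (∑ i, Y i ω) ^ t ∂μ) ^ (1 / t)
        ≤ ((Real.exp 1 * u) ^ t) ^ (1 / t) := by
          refine Real.rpow_le_rpow ?_ hfinal (by positivity)
          exact integral_nonneg fun ω => Real.rpow_nonneg
            (Finset.sum_nonneg fun i _ => hpos i ω) t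
      _ = Real.exp 1 * u := by
          rw [← Real.rpow_mul (by positivity), mul_one_div_cancel htne, Real.rpow_one]
  -- Step B : S is nonempty
  have hS_ne : S.Nonempty := by
    have hmono : ∀ n : ℕ, ∀ ω, |(1 + Y0 ω / ((n:ℝ) + 1)) ^ t| ≤ (1 + Y0 ω / 1) ^ t := by
      intro n ω
      have hY : 0 ≤ Y0 ω := hpos _ ω
      have hb : (0:ℝ) ≤ 1 + Y0 ω / ((n:ℝ) + 1) := by positivity
      rw [abs_of_nonneg (Real.rpow_nonneg hb t)]
      refine Real.rpow_le_rpow hb ?_ ht0.le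
      rw [div_one]
      have : Y0 ω / ((n:ℝ) + 1) ≤ Y0 ω := by
        apply div_le_self hY
        have : (0:ℝ) ≤ (n:ℝ) := Nat.cast_nonneg n
        linarith
      linarith
    have htend : Tendsto (fun n : ℕ => ∫ ω, (1 + Y0 ω / ((n:ℝ) + 1)) ^ t ∂μ) atTop (nhds 1) := by
      have h1 : Tendsto (fun n : ℕ => ∫ ω, (1 + Y0 ω / ((n:ℝ) + 1)) ^ t ∂μ) atTop
          (nhds (∫ ω, (1:ℝ) ∂μ)) := by
        refine tendsto_integral_of_dominated_convergence (fun ω => (1 + Y0 ω / 1) ^ t) ?_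
          (hint 1 zero_lt_one) ?_ ?_
        · intro n
          exact ((Real.continuous_rpow_const ht0.le).measurable.comp
            (measurable_const.add ((hmeas _).div_const _))).aestronglyMeasurable
        · intro n
          exact Filter.Eventually.of_forall fun ω => hmono n ω
        · refine Filter.Eventually.of_forall fun ω => ?_
          have hden : Tendsto (fun n : ℕ => (n:ℝ) + 1) atTop atTop :=
            tendsto_atTop_add_const_right _ 1 tendsto_natCast_atTop_atTop
          have hdiv : Tendsto (fun n : ℕ => Y0 ω / ((n:ℝ) + 1)) atTop (nhds 0) :=
            Tendsto.div_atTop tendsto_const_nhds hden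
          have hbase : Tendsto (fun n : ℕ => 1 + Y0 ω / ((n:ℝ) + 1)) atTop (nhds 1) := by
            simpa using tendsto_const_nhds.add hdiv
          have hc : ContinuousAt (fun x : ℝ => x ^ t) 1 :=
            (Real.continuousAt_rpow_const 1 t (Or.inl one_ne_zero))
          have := hc.tendsto.comp hbase
          simpa [Real.one_rpow, Function.comp_def] using this
      simpa using h1
    have hlt : (1:ℝ) < Real.exp (t / d) := by
      have : 0 < t / (d:ℝ) := div_pos ht0 hdpos
      exact Real.one_lt_exp_iff.mpr this
    have hev : ∀ᶠ n : ℕ in atTop, ∫ ω, (1 + Y0 ω / ((n:ℝ) + 1)) ^ t ∂μ < Real.exp (t / d) :=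
      htend.eventually_lt_const hlt
    obtain ⟨n, hn⟩ := hev.exists
    exact ⟨(n:ℝ) + 1, by positivity, hn.le⟩
  -- Step C : conclude
  have hbdd : BddBelow S := ⟨0, fun u hu => hu.1.le⟩
  have he : (0:ℝ) < Real.exp 1 := Real.exp_pos 1
  have hfin : (∫ ω, (∑ i, Y i ω) ^ t ∂μ) ^ (1 / t) / Real.exp 1 ≤ sInf S := by
    refine le_csInf hS_ne fun u hu => ?_
    rw [div_le_iff₀' he]
    exact key u hu
  exact (div_le_iff₀' he).mp hfin
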